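/- Let H be a separable infinite-dimensional complex Hilbert space and T : H → H a bounded linear operator. Then T satisfies the hypothesis of the Hypercyclicity Criterion if and only if there exist a dense subset Y of H and a strictly increasing sequence (n_k) of positive integers such that the sequence of operators (T^{n_k})_k is hypercyclic and T^{n_k} y → 0 for every y ∈ Y. -/

import Mathlib

open Filter Topology

/-- `T` satisfies the hypothesis of the Hypercyclicity Criterion. -/
def SatisfiesHypercyclicityCriterion
    {H : Type*} [NormedAddCommGroup H] [InnerProductSpace ℂ H]
    (T : H →L[ℂ] H) : Prop :=
  ∃ (Y Z : Set H) (n : ℕ → ℕ) (S : ℕ → H → H),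
    Dense Y ∧ Dense Z ∧ StrictMono n ∧ (∀ k, 0 < n k) ∧
    (∀ y ∈ Y, Filter.Tendsto (fun k => (T ^ n k) y) Filter.atTop (nhds 0)) ∧
    (∀ z ∈ Z, Filter.Tendsto (fun k => S k z) Filter.atTop (nhds 0) ∧
      Filter.Tendsto (fun k => (T ^ n k) (S k z)) Filter.atTop (nhds z))

/-- Proposition 2.12, (i) ⇔ (ii). -/
theorem criterion_iff_hypercyclic_subsequence_tending_to_zero
    {H : Type*} [NormedAddCommGroup H] [InnerProductSpace ℂ H]
    [CompleteSpace H] [TopologicalSpace.SeparableSpace H]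
    (hdim : ¬ FiniteDimensional ℂ H)
    (T : H →L[ℂ] H) :
    SatisfiesHypercyclicityCriterion T ↔
    ∃ (Y : Set H) (n : ℕ → ℕ), Dense Y ∧ StrictMono n ∧ (∀ k, 0 < n k) ∧
      (∃ x : H, Dense (Set.range fun k : ℕ => (T ^ n k) x)) ∧
      (∀ y ∈ Y, Filter.Tendsto (fun k => (T ^ n k) y) Filter.atTop (nhds 0)) := by
  classical
  constructor
  · rintro ⟨Y, Z, n, S, hY, hZ, hmono, hpos, hY0, hZS⟩
    refine ⟨Y, n, hY, hmono, hpos, ?_, hY0⟩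
    haveI : SecondCountableTopology H :=
      UniformSpace.secondCountable_of_separable H
    obtain ⟨b, hbc, hbne, hb⟩ := TopologicalSpace.exists_countable_basis H
    have hGdense : Dense (⋂ s ∈ b, ⋃ k, (fun v => (T ^ n k) v) ⁻¹' s) := by
      refine dense_biInter_of_isOpen (fun s hs => ?_) hbc (fun s hs => ?_)
      · exact isOpen_iUnion fun k => (hb.isOpen hs).preimage (T ^ n k).continuous
      · rw [dense_iff_inter_open]
        intro U hU hUne
        obtain ⟨y, hyY, hyU⟩ := hY.exists_mem_open hU hUne
        have hsne : s.Nonempty := by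
          rcases Set.eq_empty_or_nonempty s with h | h
          · exact absurd (h ▸ hs) hbne
          · exact h
        obtain ⟨z, hzZ, hzs⟩ := hZ.exists_mem_open (hb.isOpen hs) hsne
        have h1 : Tendsto (fun k => y + S k z) atTop (𝓝 y) := by
          simpa using tendsto_const_nhds.add (hZS z hzZ).1
        have h2 : Tendsto (fun k => (T ^ n k) (y + S k z)) atTop (𝓝 z) := by
          have := (hY0 y hyY).add (hZS z hzZ).2
          simpa [map_add] using this
        have e1 : ∀ᶠ k in atTop, y + S k z ∈ U := h1.eventually (hU.mem_nhds hyU)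
        have e2 : ∀ᶠ k in atTop, (T ^ n k) (y + S k z) ∈ s :=
          h2.eventually ((hb.isOpen hs).mem_nhds hzs)
        obtain ⟨k, hk1, hk2⟩ := (e1.and e2).exists
        exact ⟨y + S k z, hk1, Set.mem_iUnion.2 ⟨k, hk2⟩⟩
    obtain ⟨x, hx⟩ := hGdense.nonempty
    refine ⟨x, hb.dense_iff.2 fun o ho hone => ?_⟩
    have := Set.mem_iInter₂.1 hx o ho
    obtain ⟨k, hk⟩ := Set.mem_iUnion.1 this
    exact ⟨(T ^ n k) x, hk, Set.mem_range_self k⟩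
  · rintro ⟨Y, n, hY, hmono, hpos, ⟨x, hx⟩, hY0⟩
    have hnt : Nontrivial H := by
      by_contra h
      rw [not_nontrivial_iff_subsingleton] at h
      exact hdim inferInstance
    haveI : ∀ v : H, NeBot (𝓝[≠] v) := fun v => Module.punctured_nhds_neBot ℂ H v
    -- tails of the orbit are dense
    have tail : ∀ K : ℕ, Dense ((fun k => (T ^ n k) x) '' Set.Ici K) := by
      intro K
      have h1 : Dense (Set.range (fun k => (T ^ n k) x)
          \ ((fun k => (T ^ n k) x) '' Set.Iio K)) :=
        hx.diff_finite ((Set.finite_Iio K).image _)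
      refine h1.mono ?_
      rintro _ ⟨⟨k, rfl⟩, hnot⟩
      exact ⟨k, Set.mem_Ici.2 (le_of_not_gt fun h => hnot ⟨k, Set.mem_Iio.2 h, rfl⟩), rfl⟩
    have freq : ∀ l : ℕ, ∃ᶠ k in atTop,
        ∃ v : H, ‖v‖ < 1 / (l + 1) ∧ ‖(T ^ n k) v - x‖ < 1 / (l + 1) := by
      intro l
      rw [frequently_atTop]
      intro K
      have hε : (0 : ℝ) < 1 / (l + 1) := by positivity
      obtain ⟨y, hyb, hyY⟩ := (Metric.dense_iff.1 hY) x _ hε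
      have hyx : ‖x - y‖ < 1 / (l + 1) := by
        rw [← dist_eq_norm, dist_comm]; exact hyb
      have hhalf : (0 : ℝ) < 1 / (l + 1) / 2 := by positivity
      obtain ⟨K', hK'⟩ := (Metric.tendsto_atTop.1 (hY0 y hyY)) _ hhalf
      obtain ⟨p, hpb, hpmem⟩ := (Metric.dense_iff.1 (tail (max K K'))) x _ hhalf
      obtain ⟨k, hk, rfl⟩ := hpmem
      refine ⟨k, le_trans (le_max_left K K') hk, x - y, hyx, ?_⟩
      have hb1 : ‖(T ^ n k) x - x‖ < 1 / (l + 1) / 2 := by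
        rw [← dist_eq_norm]; rw [Metric.mem_ball] at hpb; exact hpb
      have hb2 : ‖(T ^ n k) y‖ < 1 / (l + 1) / 2 := by
        have := hK' k (le_trans (le_max_right K K') hk)
        rwa [dist_eq_norm, sub_zero] at this
      calc ‖(T ^ n k) (x - y) - x‖ = ‖((T ^ n k) x - x) - (T ^ n k) y‖ := by
            rw [map_sub, sub_right_comm]
        _ ≤ ‖(T ^ n k) x - x‖ + ‖(T ^ n k) y‖ := norm_sub_le _ _
        _ < 1 / (l + 1) / 2 + 1 / (l + 1) / 2 := add_lt_add hb1 hb2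
        _ = 1 / (l + 1) := by ring
    obtain ⟨φ, hφ, hP⟩ := Filter.extraction_forall_of_frequently freq
    choose w hw1 hw2 using hP
    have hlim : Tendsto (fun l : ℕ => 1 / ((l : ℝ) + 1)) atTop (𝓝 0) :=
      tendsto_one_div_add_atTop_nhds_zero_nat
    have hw0 : Tendsto w atTop (𝓝 0) :=
      squeeze_zero_norm (fun l => (hw1 l).le) hlim
    have hTw : Tendsto (fun l => (T ^ n (φ l)) (w l)) atTop (𝓝 x) := by
      rw [← tendsto_sub_nhds_zero_iff]
      exact squeeze_zero_norm (fun l => (hw2 l).le) hlim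
    set Z : Set H := Set.range (fun k => (T ^ n k) x) with hZdef
    have hj : ∀ z ∈ Z, ∃ k, (T ^ n k) x = z := fun z hz => hz
    let j : H → ℕ := fun z => if h : z ∈ Z then (hj z h).choose else 0
    refine ⟨Y, Z, fun l => n (φ l), fun l z => (T ^ n (j z)) (w l),
      hY, hx, hmono.comp hφ, fun l => hpos _, fun y hy => (hY0 y hy).comp hφ.tendsto_atTop,
      fun z hz => ?_⟩
    have hjz : (T ^ n (j z)) x = z := by
      simp only [j, dif_pos hz]
      exact (hj z hz).choose_spec
    constructor
    · have := ((T ^ n (j z)).continuous.tendsto 0).comp hw0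
      simpa [Function.comp_def] using this
    · have hcomm : ∀ l, (T ^ n (φ l)) ((T ^ n (j z)) (w l))
          = (T ^ n (j z)) ((T ^ n (φ l)) (w l)) := by
        intro l
        rw [← ContinuousLinearMap.mul_apply, ← ContinuousLinearMap.mul_apply,
          ← pow_add, ← pow_add, add_comm]
      simp only [hcomm]
      have := ((T ^ n (j z)).continuous.tendsto x).comp hTw
      rw [hjz] at this
      exact this
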